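/- Let T > 0 be a real number, D a natural number, and 0 < λ < 1. If positive reals l_1, …, l_{D+1} satisfy l_1 + ⋯ + l_{D+1} = T and Σ_{i=1}^{D+1} f_λ(l_i) = (D+1) · f_λ(T/(D+1)), where f_λ(x) = (1 − λ^x)/(1 − λ), then l_1 = l_2 = ⋯ = l_{D+1} = T/(D+1). That is, equality in the Jensen bound holds only for the uniform partition. -/

import Mathlib

lemma strictConvexOn_const_rpow {lam : ℝ} (hlam0 : 0 < lam) (hlam1 : lam < 1) :
    StrictConvexOn ℝ Set.univ (fun x : ℝ => lam ^ x) := by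
  have hlog : Real.log lam < 0 := Real.log_neg hlam0 hlam1
  refine ⟨convex_univ, ?_⟩
  intro x _ y _ hxy a b ha hb hab
  have hx : lam ^ x = Real.exp (x * Real.log lam) := by
    rw [Real.rpow_def_of_pos hlam0, mul_comm]
  have hy : lam ^ y = Real.exp (y * Real.log lam) := by
    rw [Real.rpow_def_of_pos hlam0, mul_comm]
  have hxy' : x * Real.log lam ≠ y * Real.log lam := by
    intro h
    exact hxy (mul_right_cancel₀ hlog.ne h)
  have := strictConvexOn_exp.2 (Set.mem_univ (x * Real.log lam))
    (Set.mem_univ (y * Real.log lam)) hxy' ha hb hab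
  simp only [smul_eq_mul] at this ⊢
  calc lam ^ (a * x + b * y) = Real.exp ((a * x + b * y) * Real.log lam) := by
        rw [Real.rpow_def_of_pos hlam0, mul_comm]
    _ = Real.exp (a * (x * Real.log lam) + b * (y * Real.log lam)) := by ring_nf
    _ < a * Real.exp (x * Real.log lam) + b * Real.exp (y * Real.log lam) := this
    _ = a * lam ^ x + b * lam ^ y := by rw [hx, hy]

/-- Equality case of the Uniform Writing optimality theorem (Theorem 3): if
`0 < λ < 1`, the positive interval lengths sum to `T`, and the Jensen bound
`∑ f_λ(l i) = (D+1) · f_λ(T/(D+1))` holds with equality, then the partition is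
uniform: `l i = T/(D+1)` for all `i`. -/
theorem uniform_writing_equality_case (T : ℝ) (hT : 0 < T) (D : ℕ) (lam : ℝ)
    (hlam0 : 0 < lam) (hlam1 : lam < 1)
    (l : Fin (D + 1) → ℝ) (hl : ∀ i, 0 < l i)
    (hsum : ∑ i, l i = T)
    (heq : ∑ i, (1 - lam ^ (l i)) / (1 - lam)
      = ((D : ℝ) + 1) * ((1 - lam ^ (T / ((D : ℝ) + 1))) / (1 - lam))) :
    ∀ i, l i = T / ((D : ℝ) + 1) := by
  have hD : (0:ℝ) < (D : ℝ) + 1 := by positivity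
  have h1l : (0:ℝ) < 1 - lam := by linarith
  -- simplify heq to ∑ lam ^ l i = (D+1) * lam ^ (T/(D+1))
  have key : ∑ i, lam ^ (l i) = ((D : ℝ) + 1) * lam ^ (T / ((D : ℝ) + 1)) := by
    have h2 := heq
    rw [← Finset.sum_div] at h2
    field_simp at h2
    simp only [Finset.sum_sub_distrib, Finset.sum_const, Finset.card_univ, Fintype.card_fin, nsmul_eq_mul, Nat.cast_add, Nat.cast_one, mul_one] at h2
    linear_combination -h2
  set w : Fin (D + 1) → ℝ := fun _ => 1 / ((D : ℝ) + 1) with hw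
  have hw0 : ∀ i ∈ Finset.univ (α := Fin (D+1)), 0 < w i := fun i _ => by positivity
  have hw1 : ∑ i : Fin (D+1), w i = 1 := by
    simp [hw, Finset.sum_const, Finset.card_univ]
    field_simp
  have hmem : ∀ i ∈ Finset.univ (α := Fin (D+1)), l i ∈ Set.univ := fun _ _ => Set.mem_univ _
  have hle : ∑ i, w i • (fun x : ℝ => lam ^ x) (l i)
      ≤ (fun x : ℝ => lam ^ x) (∑ i, w i • l i) := by
    have hs : ∑ i, w i • l i = T / ((D : ℝ) + 1) := by
      simp only [hw, smul_eq_mul, ← Finset.mul_sum, hsum]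
      ring
    rw [hs]
    simp only [hw, smul_eq_mul, ← Finset.mul_sum, key]
    field_simp
    exact le_rfl
  have hall := (strictConvexOn_const_rpow hlam0 hlam1).eq_of_le_map_sum hw0 hw1 hmem hle
  intro i
  have : ∀ j, l j = l i := fun j =>
    hall (Finset.mem_univ j) (Finset.mem_univ i)
  have hsum' : ((D : ℝ) + 1) * l i = T := by
    rw [← hsum]
    rw [Finset.sum_congr rfl (fun j _ => this j)]
    simp [Finset.card_univ, mul_comm]
  field_simp
  linarith [hsum']
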